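/- Let H be the Hilbert space of holomorphic functions f(z₁,z₂) = Σ_{j,k≥0} a_{jk} z₁ʲ z₂ᵏ on ℂ × 𝔻 (where 𝔻 is the open unit disk) with ‖f‖² := Σ_{j,k≥0} j!·|a_{jk}|² < ∞. Then H is a reproducing kernel Hilbert space on ℂ × 𝔻 with reproducing kernel K((z₁,z₂),(w₁,w₂)) = e^{z₁·conj(w₁)}/(1 − z₂·conj(w₂)), which is normalized at (0,0) and nowhere zero; moreover every multiplier of H is a bounded holomorphic function on ℂ × 𝔻 that is independent of the first variable, and consequently H contains no cyclic functions. -/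

import Mathlib

open scoped ComplexOrder InnerProductSpace

/-- `h : X → ℂ` is a *multiplier* of the RKHS `H`, realized as a space of
functions on `X` via the evaluation map `ev`. -/
def IsMultiplier {X H : Type*} (ev : H → X → ℂ) (h : X → ℂ) : Prop :=
  ∀ f : H, ∃ g : H, ev g = fun x => h x * ev f x

/-- `f ∈ H` is *cyclic*: the set `{h·f : h a multiplier}` is dense in `H`. -/
def IsCyclicVec {X H : Type*} [TopologicalSpace H] (ev : H → X → ℂ) (f : H) : Prop :=
  Dense {g : H | ∃ h : X → ℂ, IsMultiplier ev h ∧ ev g = fun x => h x * ev f x}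

/-- A positive semi-definite function on `X × X`. -/
def IsPSDKernel {X : Type*} (F : X → X → ℂ) : Prop :=
  ∀ (n : ℕ) (x : Fin n → X), (Matrix.of fun i j : Fin n => F (x i) (x j)).PosSemidef

/-- `K` is a *complete Pick kernel*. -/
def IsCompletePick {X : Type*} (K : X → X → ℂ) : Prop :=
  (∀ x y, K x y ≠ 0) ∧
    ∃ x₀ : X, IsPSDKernel fun x y => 1 - K x x₀ * K x₀ y / (K x y * K x₀ x₀)

noncomputable section

/-- The set `ℂ × 𝔻`. -/
abbrev Stmt11.X : Type := {q : ℂ × ℂ // ‖q.2‖ < 1}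

/-- The Hilbert space `H` of power series `f(z₁,z₂) = Σ a_{jk} z₁ʲ z₂ᵏ` with
`Σ j!·|a_{jk}|² < ∞`, realized as a weighted `ℓ²` space: an element `b` of
`lp _ 2` corresponds to the coefficients `a_{jk} = b_{jk}/√(j!)`, so that
`‖b‖² = Σ j!·|a_{jk}|²`. -/
abbrev Stmt11.H : Type := lp (fun _ : ℕ × ℕ => ℂ) 2

/-- Evaluation of an element of `H` at a point of `ℂ × 𝔻`:
`ev b (z₁,z₂) = Σ_{j,k} (b_{jk}/√(j!)) z₁ʲ z₂ᵏ`. -/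
def Stmt11.ev (b : Stmt11.H) (p : Stmt11.X) : ℂ :=
  ∑' jk : ℕ × ℕ,
    (b jk / (Real.sqrt (Nat.factorial jk.1) : ℂ)) * p.1.1 ^ jk.1 * p.1.2 ^ jk.2

/-- The point `(0,0) ∈ ℂ × 𝔻`. -/
def Stmt11.x₀ : Stmt11.X := ⟨(0, 0), by simp⟩

namespace Stmt11

/-! ### basic facts about `sqf` -/

def sqf (j : ℕ) : ℝ := Real.sqrt (Nat.factorial j)

lemma sqf_pos (j : ℕ) : 0 < sqf j :=
  Real.sqrt_pos.2 (by exact_mod_cast Nat.factorial_pos j)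

lemma one_le_sqf (j : ℕ) : 1 ≤ sqf j := by
  rw [sqf, show (1:ℝ) = Real.sqrt 1 by simp]
  exact Real.sqrt_le_sqrt (by exact_mod_cast Nat.one_le_iff_ne_zero.2 (Nat.factorial_ne_zero j))

lemma sqf_ne (j : ℕ) : (sqf j : ℂ) ≠ 0 := by
  simpa using (sqf_pos j).ne'

lemma sqf_mul_self (j : ℕ) : sqf j * sqf j = (Nat.factorial j : ℝ) :=
  Real.mul_self_sqrt (by positivity)

/-! ### generic summability lemmas -/

lemma summable_mul_sq {ι : Type*} {f g : ι → ℝ} (h0f : ∀ i, 0 ≤ f i) (h0g : ∀ i, 0 ≤ g i)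
    (hf : Summable fun i => f i ^ 2) (hg : Summable fun i => g i ^ 2) :
    Summable fun i => f i * g i := by
  refine Summable.of_nonneg_of_le (fun i => mul_nonneg (h0f i) (h0g i)) (fun i => ?_)
    ((hf.add hg).div_const 2)
  nlinarith [sq_nonneg (f i - g i)]

lemma sq_pow_div_sqf (x : ℝ) (hx : 0 ≤ x) (j : ℕ) :
    (x ^ j / sqf j) ^ 2 = (x ^ 2) ^ j / (Nat.factorial j : ℝ) := by
  rw [div_pow, ← pow_mul, ← pow_mul, mul_comm j 2, pow_mul]
  congr 1
  rw [sq, sqf_mul_self]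

lemma summable_sqrt_mul {ι : Type*} {u v : ι → ℝ} (h0u : ∀ i, 0 ≤ u i) (h0v : ∀ i, 0 ≤ v i)
    (hu : Summable u) (hv : Summable v) :
    Summable fun i => Real.sqrt (u i) * Real.sqrt (v i) :=
  summable_mul_sq (fun i => Real.sqrt_nonneg _) (fun i => Real.sqrt_nonneg _)
    (hu.congr fun i => (Real.sq_sqrt (h0u i)).symm)
    (hv.congr fun i => (Real.sq_sqrt (h0v i)).symm)

lemma summable_pow_div_sqf (x : ℝ) (hx : 0 ≤ x) :
    Summable fun j : ℕ => x ^ j / sqf j := by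
  have hu : Summable fun j : ℕ => (2 * x ^ 2) ^ j / (Nat.factorial j : ℝ) :=
    Real.summable_pow_div_factorial _
  have hv : Summable fun j : ℕ => (2 : ℝ)⁻¹ ^ j :=
    summable_geometric_of_lt_one (by norm_num) (by norm_num)
  have h := summable_sqrt_mul
    (fun j => div_nonneg (pow_nonneg (by positivity) _) (Nat.cast_nonneg _))
    (fun j => by positivity) hu hv
  refine h.congr fun j => ?_
  rw [← Real.sqrt_mul (by positivity), div_mul_eq_mul_div, ← mul_pow]
  have : 2 * x ^ 2 * 2⁻¹ = x ^ 2 := by ring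
  rw [this, ← sq_pow_div_sqf x hx,
    Real.sqrt_sq (div_nonneg (pow_nonneg hx _) (sqf_pos j).le)]

lemma summable_sq_coeff (b : H) : Summable fun jk : ℕ × ℕ => ‖b jk‖ ^ 2 := by
  have := (lp.memℓp b).summable (p := 2) (by norm_num)
  refine this.congr fun jk => ?_
  norm_num

/-! ### the kernel functions -/

def kfun (p : X) : ℕ × ℕ → ℂ := fun jk =>
  (starRingEnd ℂ) p.1.1 ^ jk.1 / (sqf jk.1 : ℂ) * (starRingEnd ℂ) p.1.2 ^ jk.2

lemma norm_kfun (p : X) (jk : ℕ × ℕ) :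
    ‖kfun p jk‖ = ‖p.1.1‖ ^ jk.1 / sqf jk.1 * ‖p.1.2‖ ^ jk.2 := by
  simp [kfun, norm_div, norm_mul, norm_pow, Complex.norm_conj,
    Complex.norm_real, abs_of_pos (sqf_pos jk.1)]

lemma abs_snd_sq_lt_one (p : X) : ‖p.1.2‖ ^ 2 < 1 := by
  have h := p.2
  nlinarith [norm_nonneg p.1.2]

lemma summable_sq_kfun (p : X) : Summable fun jk : ℕ × ℕ => ‖kfun p jk‖ ^ 2 := by
  have h := Summable.mul_of_nonneg
    (f := fun j : ℕ => (‖p.1.1‖ ^ 2) ^ j / (Nat.factorial j : ℝ))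
    (g := fun k : ℕ => (‖p.1.2‖ ^ 2) ^ k)
    (Real.summable_pow_div_factorial _)
    (summable_geometric_of_lt_one (by positivity) (abs_snd_sq_lt_one p))
    (fun j => by positivity) (fun k => by positivity)
  refine h.congr fun jk => ?_
  rw [norm_kfun, mul_pow, sq_pow_div_sqf _ (norm_nonneg _)]
  ring

lemma memℓp_kfun (p : X) : Memℓp (kfun p) 2 := by
  refine memℓp_gen ((summable_sq_kfun p).congr fun jk => ?_)
  norm_num

def kvec (p : X) : H := ⟨kfun p, memℓp_kfun p⟩

@[simp] lemma kvec_apply (p : X) (jk : ℕ × ℕ) : (kvec p : ℕ × ℕ → ℂ) jk = kfun p jk := rfl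

/-! ### part 1 : summability -/

lemma norm_term (b : H) (p : X) (jk : ℕ × ℕ) :
    ‖(b jk / (Real.sqrt (Nat.factorial jk.1) : ℂ)) * p.1.1 ^ jk.1 * p.1.2 ^ jk.2‖
      = ‖b jk‖ * ‖kfun p jk‖ := by
  rw [norm_kfun, norm_mul, norm_mul, norm_div, norm_pow, norm_pow]
  simp only [Complex.norm_real]
  rw [show Real.sqrt (Nat.factorial jk.1) = sqf jk.1 from rfl,
    Real.norm_of_nonneg (sqf_pos jk.1).le]
  ring

lemma summable_norm_term (b : H) (p : X) :
    Summable fun jk : ℕ × ℕ =>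
      ‖(b jk / (Real.sqrt (Nat.factorial jk.1) : ℂ)) * p.1.1 ^ jk.1 * p.1.2 ^ jk.2‖ := by
  refine (summable_mul_sq (fun jk => norm_nonneg _) (fun jk => norm_nonneg _)
    (summable_sq_coeff b) (summable_sq_kfun p)).congr fun jk => (norm_term b p jk).symm

lemma summable_term (b : H) (p : X) :
    Summable fun jk : ℕ × ℕ =>
      (b jk / (Real.sqrt (Nat.factorial jk.1) : ℂ)) * p.1.1 ^ jk.1 * p.1.2 ^ jk.2 :=
  (summable_norm_term b p).of_norm

/-! ### the reproducing property -/

lemma conj_kfun (p : X) (jk : ℕ × ℕ) :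
    (starRingEnd ℂ) (kfun p jk) = p.1.1 ^ jk.1 / (sqf jk.1 : ℂ) * p.1.2 ^ jk.2 := by
  simp [kfun, map_mul, map_div₀, map_pow, Complex.conj_conj, Complex.conj_ofReal]

lemma ev_eq_inner (b : H) (p : X) : ev b p = ⟪kvec p, b⟫_ℂ := by
  rw [lp.inner_eq_tsum]
  refine tsum_congr fun jk => ?_
  rw [show ⟪(kvec p : ℕ × ℕ → ℂ) jk, b jk⟫_ℂ = (starRingEnd ℂ) (kfun p jk) * b jk by
      rw [RCLike.inner_apply, kvec_apply]; ring,
    conj_kfun]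
  rw [show Real.sqrt (Nat.factorial jk.1) = sqf jk.1 from rfl]
  field_simp

lemma norm_snd_mul_lt_one (p q : X) : ‖p.1.2 * (starRingEnd ℂ) q.1.2‖ < 1 := by
  rw [norm_mul, Complex.norm_conj]
  have h1 := p.2
  have h2 := q.2
  nlinarith [norm_nonneg p.1.2, norm_nonneg q.1.2]

lemma ev_kvec (p q : X) :
    ev (kvec q) p = Complex.exp (p.1.1 * (starRingEnd ℂ) q.1.1) /
      (1 - p.1.2 * (starRingEnd ℂ) q.1.2) := by
  set x : ℂ := p.1.1 * (starRingEnd ℂ) q.1.1 with hx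
  set y : ℂ := p.1.2 * (starRingEnd ℂ) q.1.2 with hy
  have hterm : ∀ jk : ℕ × ℕ,
      ((kvec q : ℕ × ℕ → ℂ) jk / (Real.sqrt (Nat.factorial jk.1) : ℂ)) *
        p.1.1 ^ jk.1 * p.1.2 ^ jk.2
      = (x ^ jk.1 / (Nat.factorial jk.1 : ℂ)) * y ^ jk.2 := by
    intro jk
    rw [kvec_apply, kfun]
    rw [show Real.sqrt (Nat.factorial jk.1) = sqf jk.1 from rfl]
    have hcc : (sqf jk.1 : ℂ) * (sqf jk.1 : ℂ) = (Nat.factorial jk.1 : ℂ) := by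
      rw [← Complex.ofReal_mul, sqf_mul_self]
      norm_num
    have hf : (Nat.factorial jk.1 : ℂ) ≠ 0 := by
      exact_mod_cast (Nat.factorial_pos jk.1).ne'
    field_simp [hx, hy, mul_pow]
    rw [sq, hcc, mul_div_assoc, div_self hf, mul_one, hx, hy]
    ring
  have hu : Summable fun j : ℕ => ‖x ^ j / (Nat.factorial j : ℂ)‖ := by
    refine (Real.summable_pow_div_factorial ‖x‖).congr fun j => ?_
    rw [norm_div, norm_pow]
    norm_num
  have hv : Summable fun k : ℕ => ‖y ^ k‖ := by
    refine (summable_geometric_of_lt_one (norm_nonneg y) (norm_snd_mul_lt_one p q)).congr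
      fun k => ?_
    rw [norm_pow]
  calc ev (kvec q) p
      = ∑' jk : ℕ × ℕ, (x ^ jk.1 / (Nat.factorial jk.1 : ℂ)) * y ^ jk.2 :=
        tsum_congr hterm
    _ = (∑' j : ℕ, x ^ j / (Nat.factorial j : ℂ)) * ∑' k : ℕ, y ^ k :=
        (tsum_mul_tsum_of_summable_norm hu hv).symm
    _ = Complex.exp x * (1 - y)⁻¹ := by
        rw [tsum_geometric_of_norm_lt_one (norm_snd_mul_lt_one p q)]
        congr 1
        rw [Complex.exp_eq_exp_ℂ, NormedSpace.exp_eq_tsum_div]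
    _ = Complex.exp x / (1 - y) := (div_eq_mul_inv _ _).symm

lemma one_sub_ne (p q : X) : (1 : ℂ) - p.1.2 * (starRingEnd ℂ) q.1.2 ≠ 0 := by
  intro h
  have : (1 : ℂ) = p.1.2 * (starRingEnd ℂ) q.1.2 := by linear_combination h
  have h2 := norm_snd_mul_lt_one p q
  rw [← this] at h2
  norm_num at h2

lemma ev_kvec_ne (p q : X) : ev (kvec q) p ≠ 0 := by
  rw [ev_kvec]
  exact div_ne_zero (Complex.exp_ne_zero _) (one_sub_ne p q)

lemma ev_kvec_x₀ (p : X) : ev (kvec x₀) p = 1 := by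
  rw [ev_kvec]
  simp [x₀]

/-! ### linearity/continuity of evaluation -/

lemma ev_add (b c : H) (p : X) : ev (b + c) p = ev b p + ev c p := by
  simp [ev_eq_inner, inner_add_right]

lemma ev_smul (a : ℂ) (b : H) (p : X) : ev (a • b) p = a * ev b p := by
  simp [ev_eq_inner, inner_smul_right]

lemma ev_zero (p : X) : ev (0 : H) p = 0 := by
  simp [ev_eq_inner]

/-! ### uniqueness of power series coefficients -/

lemma coeff_eq_zero {c : ℕ → ℂ} {M : ℝ} (hM : ∀ k, ‖c k‖ ≤ M)
    (h : ∀ z : ℂ, ‖z‖ < 1 → ∑' k : ℕ, c k * z ^ k = 0) : ∀ k, c k = 0 := by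
  set P : FormalMultilinearSeries ℂ ℂ ℂ := FormalMultilinearSeries.ofScalars ℂ c with hP
  have hrad : 1 ≤ P.radius := by
    refine P.le_radius_of_bound M fun n => ?_
    rw [hP, FormalMultilinearSeries.ofScalars_norm]
    simpa using hM n
  have hpos : 0 < P.radius := lt_of_lt_of_le one_pos hrad
  have hball : HasFPowerSeriesOnBall P.sum P 0 P.radius :=
    P.hasFPowerSeriesOnBall hpos
  have hsum : P.sum = fun z : ℂ => ∑' k : ℕ, c k * z ^ k := by
    funext z
    rw [FormalMultilinearSeries.sum]
    refine tsum_congr fun n => ?_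
    rw [hP, FormalMultilinearSeries.ofScalars_apply_eq, smul_eq_mul]
  have hz : P.sum =ᶠ[nhds (0 : ℂ)] 0 := by
    filter_upwards [Metric.ball_mem_nhds (0 : ℂ) one_pos] with z hz
    rw [hsum]
    exact h z (by simpa [Complex.dist_eq] using hz)
  have h0 : P = 0 := hball.hasFPowerSeriesAt.eq_zero_of_eventually hz
  intro k
  have := FormalMultilinearSeries.ofScalars_series_eq_zero (𝕜 := ℂ) (E := ℂ) (c := c)
  rw [← hP, h0] at this
  exact congrFun (this.mp rfl) k

/-! ### injectivity -/

lemma norm_coeff (b : H) (jk : ℕ × ℕ) :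
    ‖b jk / (sqf jk.1 : ℂ)‖ = ‖b jk‖ / sqf jk.1 := by
  rw [norm_div]
  congr 1
  simp [Complex.norm_real, abs_of_pos (sqf_pos jk.1)]

lemma ev_eq_zero_imp {b : H} (h : ∀ p, ev b p = 0) : b = 0 := by
  classical
  set a : ℕ × ℕ → ℂ := fun jk => b jk / (sqf jk.1 : ℂ) with ha
  have hbnorm : ∀ jk : ℕ × ℕ, ‖b jk‖ ≤ ‖b‖ :=
    fun jk => lp.norm_apply_le_norm (by norm_num) b jk
  have step1 : ∀ (z₁ z₂ : ℂ), ‖z₂‖ < 1 →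
      ∑' k : ℕ, (∑' j : ℕ, a (j, k) * z₁ ^ j) * z₂ ^ k = 0 := by
    intro z₁ z₂ hz₂
    set t : ℕ × ℕ → ℂ := fun jk => a jk * z₁ ^ jk.1 * z₂ ^ jk.2 with ht
    have hsum : Summable t := summable_term b ⟨(z₁, z₂), hz₂⟩
    have h0 : ∑' jk : ℕ × ℕ, t jk = 0 := h ⟨(z₁, z₂), hz₂⟩
    have hswap : Summable (t ∘ (Equiv.prodComm ℕ ℕ)) :=
      (Equiv.prodComm ℕ ℕ).summable_iff.2 hsum
    calc ∑' k : ℕ, (∑' j : ℕ, a (j, k) * z₁ ^ j) * z₂ ^ k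
        = ∑' k : ℕ, ∑' j : ℕ, (t ∘ (Equiv.prodComm ℕ ℕ)) (k, j) := by
          refine tsum_congr fun k => ?_
          rw [← tsum_mul_right]
          exact tsum_congr fun j => rfl
        _ = ∑' kj : ℕ × ℕ, (t ∘ (Equiv.prodComm ℕ ℕ)) kj := hswap.tsum_prod.symm
        _ = ∑' jk : ℕ × ℕ, t jk := (Equiv.prodComm ℕ ℕ).tsum_eq t
        _ = 0 := h0
  have step2 : ∀ (z₁ : ℂ) (k : ℕ), ∑' j : ℕ, a (j, k) * z₁ ^ j = 0 := by
    intro z₁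
    set cz : ℕ → ℂ := fun k => ∑' j : ℕ, a (j, k) * z₁ ^ j with hcz
    have hle : ∀ k j : ℕ, ‖a (j, k) * z₁ ^ j‖ ≤ ‖b‖ * (‖z₁‖ ^ j / sqf j) := by
      intro k j
      rw [norm_mul, ha, norm_coeff, norm_pow, div_mul_eq_mul_div,
        mul_div_assoc]
      exact mul_le_mul_of_nonneg_right (hbnorm (j, k))
        (div_nonneg (pow_nonneg (norm_nonneg _) _) (sqf_pos j).le)
    have hs : Summable fun j : ℕ => ‖b‖ * (‖z₁‖ ^ j / sqf j) :=
      (summable_pow_div_sqf _ (norm_nonneg _)).mul_left _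
    have hM : ∀ k, ‖cz k‖ ≤ ∑' j : ℕ, ‖b‖ * (‖z₁‖ ^ j / sqf j) := by
      intro k
      have hsum' : Summable fun j : ℕ => ‖a (j, k) * z₁ ^ j‖ :=
        Summable.of_nonneg_of_le (fun j => norm_nonneg _) (hle k) hs
      calc ‖cz k‖ ≤ ∑' j : ℕ, ‖a (j, k) * z₁ ^ j‖ := norm_tsum_le_tsum_norm hsum'
        _ ≤ ∑' j : ℕ, ‖b‖ * (‖z₁‖ ^ j / sqf j) := Summable.tsum_le_tsum (hle k) hsum' hs
    exact coeff_eq_zero hM (fun z hz => step1 z₁ z hz)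
  have step3 : ∀ jk : ℕ × ℕ, a jk = 0 := by
    rintro ⟨j, k⟩
    have hM : ∀ j : ℕ, ‖a (j, k)‖ ≤ ‖b‖ := by
      intro j
      rw [ha, norm_coeff]
      exact le_trans (div_le_self (norm_nonneg _) (one_le_sqf j)) (hbnorm (j, k))
    exact coeff_eq_zero hM (fun z _ => step2 z k) j
  refine lp.ext (funext fun jk => ?_)
  have h1 := step3 jk
  rw [ha] at h1
  have h2 := (div_eq_zero_iff.mp h1).resolve_right (sqf_ne jk.1)
  simpa using h2

lemma ev_injective : Function.Injective (fun b : H => ev b) := by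
  intro b c h
  have hz : ∀ p, ev (b - c) p = 0 := fun p => by
    rw [ev_eq_inner, inner_sub_right, ← ev_eq_inner, ← ev_eq_inner,
      show ev b p = ev c p from congrFun h p, sub_self]
  exact sub_eq_zero.mp (ev_eq_zero_imp hz)

/-! ### holomorphy -/

lemma nat_sq_le_four_pow (j : ℕ) : ((j : ℝ)) ^ 2 ≤ (4 : ℝ) ^ j := by
  have h : (j : ℝ) ≤ 2 ^ j := by exact_mod_cast (Nat.lt_two_pow_self (n := j)).le
  have h2 : ((j : ℝ)) ^ 2 ≤ ((2 : ℝ) ^ j) ^ 2 := by gcongr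
  calc ((j : ℝ)) ^ 2 ≤ ((2 : ℝ) ^ j) ^ 2 := h2
    _ = (4 : ℝ) ^ j := by rw [← pow_mul, mul_comm, pow_mul]; norm_num

lemma summable_sq_pow_div_factorial (x : ℝ) (hx : 0 ≤ x) :
    Summable fun j : ℕ => (j : ℝ) ^ 2 * x ^ j / (Nat.factorial j : ℝ) := by
  refine Summable.of_nonneg_of_le (fun j => by positivity) (fun j => ?_)
    (Real.summable_pow_div_factorial (4 * x))
  have hfact : (0 : ℝ) < (Nat.factorial j : ℝ) := by exact_mod_cast Nat.factorial_pos j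
  rw [mul_pow]
  have h5 : (j : ℝ) ^ 2 * x ^ j ≤ 4 ^ j * x ^ j :=
    mul_le_mul_of_nonneg_right (nat_sq_le_four_pow j) (pow_nonneg hx j)
  exact div_le_div_of_nonneg_right h5 hfact.le

lemma deriv_bound_ineq (j k : ℕ) {R r : ℝ} (hR : 1 ≤ R) (hr0 : 0 < r) (hr1 : r ≤ 1) :
    R ^ j * ((k : ℝ) * r ^ (k - 1)) + r ^ k * ((j : ℝ) * R ^ (j - 1))
      ≤ ((j : ℝ) + k) * (R ^ j * r ^ k) / r := by
  have hR0 : (0 : ℝ) < R := lt_of_lt_of_le one_pos hR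
  rw [le_div_iff₀ hr0, add_mul]
  have e1 : R ^ j * ((k : ℝ) * r ^ (k - 1)) * r = (k : ℝ) * (R ^ j * r ^ k) := by
    rcases Nat.eq_zero_or_pos k with hk | hk
    · subst hk; simp
    · have hrr : r ^ (k - 1) * r = r ^ k := by rw [← pow_succ, Nat.sub_add_cancel hk]
      calc R ^ j * ((k : ℝ) * r ^ (k - 1)) * r = (k : ℝ) * (R ^ j * (r ^ (k - 1) * r)) := by ring
        _ = (k : ℝ) * (R ^ j * r ^ k) := by rw [hrr]
  have e2 : r ^ k * ((j : ℝ) * R ^ (j - 1)) * r ≤ (j : ℝ) * (R ^ j * r ^ k) := by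
    calc r ^ k * ((j : ℝ) * R ^ (j - 1)) * r ≤ r ^ k * ((j : ℝ) * R ^ j) * 1 := by
          have h4 : R ^ (j - 1) ≤ R ^ j := pow_le_pow_right₀ hR (Nat.sub_le j 1)
          gcongr
      _ = (j : ℝ) * (R ^ j * r ^ k) := by ring
  calc R ^ j * ((k : ℝ) * r ^ (k - 1)) * r + r ^ k * ((j : ℝ) * R ^ (j - 1)) * r
      ≤ (k : ℝ) * (R ^ j * r ^ k) + (j : ℝ) * (R ^ j * r ^ k) := add_le_add (le_of_eq e1) e2
    _ = ((j : ℝ) + k) * (R ^ j * r ^ k) := by ring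

lemma smul_smul_norm_le {L : ℂ × ℂ →L[ℂ] ℂ} (hL : ‖L‖ ≤ 1) (c1 c2 : ℂ) :
    ‖c1 • c2 • L‖ ≤ ‖c1‖ * ‖c2‖ := by
  rw [norm_smul c1 (c2 • L), norm_smul c2 L]
  calc ‖c1‖ * (‖c2‖ * ‖L‖) ≤ ‖c1‖ * (‖c2‖ * 1) := by gcongr
    _ = ‖c1‖ * ‖c2‖ := by ring

lemma norm_fst_le_one : ‖ContinuousLinearMap.fst ℂ ℂ ℂ‖ ≤ 1 :=
  ContinuousLinearMap.opNorm_le_bound _ one_pos.le fun x => by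
    simpa using norm_fst_le x

lemma norm_snd_le_one : ‖ContinuousLinearMap.snd ℂ ℂ ℂ‖ ≤ 1 :=
  ContinuousLinearMap.opNorm_le_bound _ one_pos.le fun x => by
    simpa using norm_snd_le x

set_option maxHeartbeats 1000000 in
lemma differentiableOn_F (b : H) :
    DifferentiableOn ℂ
      (fun q : ℂ × ℂ => ∑' jk : ℕ × ℕ,
        (b jk / (Real.sqrt (Nat.factorial jk.1) : ℂ)) * q.1 ^ jk.1 * q.2 ^ jk.2)
      {q : ℂ × ℂ | ‖q.2‖ < 1} := by
  intro p hp
  have hp2 : ‖p.2‖ < 1 := hp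
  have habs1 : (0 : ℝ) ≤ ‖p.1‖ := norm_nonneg _
  have habs2 : (0 : ℝ) ≤ ‖p.2‖ := norm_nonneg _
  set R : ℝ := ‖p.1‖ + 1 with hRdef
  set r : ℝ := (‖p.2‖ + 1) / 2 with hrdef
  have hR1 : 1 ≤ R := by rw [hRdef]; linarith
  have hr0 : 0 < r := by rw [hrdef]; linarith
  have hr1 : r < 1 := by rw [hrdef]; linarith
  have hpR : ‖p.1‖ < R := by rw [hRdef]; linarith
  have hpr : ‖p.2‖ < r := by rw [hrdef]; linarith
  set s : Set (ℂ × ℂ) := Metric.ball 0 R ×ˢ Metric.ball 0 r with hsdef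
  have hso : IsOpen s := Metric.isOpen_ball.prod Metric.isOpen_ball
  have hsc : IsPreconnected s :=
    ((convex_ball (0 : ℂ) R).prod (convex_ball (0 : ℂ) r)).isPreconnected
  have hmem : ∀ q : ℂ × ℂ, q ∈ s → ‖q.1‖ ≤ R ∧ ‖q.2‖ ≤ r := by
    intro q hq
    obtain ⟨h1, h2⟩ := Set.mem_prod.1 hq
    exact ⟨le_of_lt (by simpa using mem_ball_zero_iff.1 h1),
      le_of_lt (by simpa using mem_ball_zero_iff.1 h2)⟩
  have hps : p ∈ s := Set.mem_prod.2
    ⟨mem_ball_zero_iff.2 (by exact hpR),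
     mem_ball_zero_iff.2 (by exact hpr)⟩
  set a : ℕ × ℕ → ℂ := fun jk => b jk / (Real.sqrt (Nat.factorial jk.1) : ℂ) with hadef
  set D : ℕ × ℕ → ℂ × ℂ → (ℂ × ℂ →L[ℂ] ℂ) := fun jk q =>
    (a jk * q.1 ^ jk.1) • ((jk.2 : ℂ) * q.2 ^ (jk.2 - 1)) • ContinuousLinearMap.snd ℂ ℂ ℂ
      + q.2 ^ jk.2 • a jk • ((jk.1 : ℂ) * q.1 ^ (jk.1 - 1)) • ContinuousLinearMap.fst ℂ ℂ ℂ
    with hDdef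
  have hderiv : ∀ (jk : ℕ × ℕ) (q : ℂ × ℂ), q ∈ s →
      HasFDerivAt (fun q : ℂ × ℂ => a jk * q.1 ^ jk.1 * q.2 ^ jk.2) (D jk q) q := by
    intro jk q _
    have h1 : HasFDerivAt (fun q : ℂ × ℂ => q.1 ^ jk.1)
        (((jk.1 : ℂ) * q.1 ^ (jk.1 - 1)) • ContinuousLinearMap.fst ℂ ℂ ℂ) q :=
      (hasDerivAt_pow jk.1 q.1).comp_hasFDerivAt q hasFDerivAt_fst
    have h2 : HasFDerivAt (fun q : ℂ × ℂ => q.2 ^ jk.2)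
        (((jk.2 : ℂ) * q.2 ^ (jk.2 - 1)) • ContinuousLinearMap.snd ℂ ℂ ℂ) q :=
      (hasDerivAt_pow jk.2 q.2).comp_hasFDerivAt q hasFDerivAt_snd
    exact (h1.const_mul (a jk)).mul h2
  set u : ℕ × ℕ → ℝ := fun jk =>
    (1 / r) * (‖b jk‖ * ((((jk.1 : ℝ) + jk.2) * (R ^ jk.1 * r ^ jk.2)) / sqf jk.1)) with hudef
  have hna : ∀ jk : ℕ × ℕ, ‖a jk‖ = ‖b jk‖ / sqf jk.1 := fun jk => norm_coeff b jk
  have hbound : ∀ (jk : ℕ × ℕ) (q : ℂ × ℂ), q ∈ s → ‖D jk q‖ ≤ u jk := by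
    intro jk q hq
    obtain ⟨hq1, hq2⟩ := hmem q hq
    have hb1 : (0 : ℝ) ≤ ‖q.1‖ := norm_nonneg _
    have hb2 : (0 : ℝ) ≤ ‖q.2‖ := norm_nonneg _
    calc ‖D jk q‖
        ≤ ‖(a jk * q.1 ^ jk.1) • ((jk.2 : ℂ) * q.2 ^ (jk.2 - 1)) • ContinuousLinearMap.snd ℂ ℂ ℂ‖
          + ‖q.2 ^ jk.2 • a jk • ((jk.1 : ℂ) * q.1 ^ (jk.1 - 1)) • ContinuousLinearMap.fst ℂ ℂ ℂ‖ :=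
          norm_add_le _ _
      _ ≤ ‖a jk * q.1 ^ jk.1‖ * ‖(jk.2 : ℂ) * q.2 ^ (jk.2 - 1)‖
          + ‖q.2 ^ jk.2‖ * (‖a jk‖ * ‖(jk.1 : ℂ) * q.1 ^ (jk.1 - 1)‖) := by
          refine add_le_add (smul_smul_norm_le norm_snd_le_one _ _) ?_
          rw [norm_smul (q.2 ^ jk.2)
            (a jk • ((jk.1 : ℂ) * q.1 ^ (jk.1 - 1)) • ContinuousLinearMap.fst ℂ ℂ ℂ)]
          exact mul_le_mul_of_nonneg_left (smul_smul_norm_le norm_fst_le_one _ _)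
            (norm_nonneg _)
      _ = ‖a jk‖ * (‖q.1‖ ^ jk.1 * ((jk.2 : ℝ) * ‖q.2‖ ^ (jk.2 - 1))
          + ‖q.2‖ ^ jk.2 * ((jk.1 : ℝ) * ‖q.1‖ ^ (jk.1 - 1))) := by
          simp only [norm_mul, norm_pow, Complex.norm_natCast]
          ring
      _ ≤ ‖a jk‖ * (R ^ jk.1 * ((jk.2 : ℝ) * r ^ (jk.2 - 1))
          + r ^ jk.2 * ((jk.1 : ℝ) * R ^ (jk.1 - 1))) := by gcongr
      _ ≤ ‖a jk‖ * (((jk.1 : ℝ) + jk.2) * (R ^ jk.1 * r ^ jk.2) / r) :=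
          mul_le_mul_of_nonneg_left (deriv_bound_ineq jk.1 jk.2 hR1 hr0 hr1.le)
            (norm_nonneg _)
      _ = u jk := by rw [hudef, hna jk]; field_simp
  have hg2 : Summable fun jk : ℕ × ℕ =>
      (((((jk.1 : ℝ) + jk.2) * (R ^ jk.1 * r ^ jk.2)) / sqf jk.1)) ^ 2 := by
    have hP1 : Summable fun j : ℕ => (j : ℝ) ^ 2 * (R ^ 2) ^ j / (Nat.factorial j : ℝ) :=
      summable_sq_pow_div_factorial _ (by positivity)
    have hP2 : Summable fun k : ℕ => (r ^ 2) ^ k :=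
      summable_geometric_of_lt_one (by positivity) (by nlinarith)
    have hP3 : Summable fun j : ℕ => (R ^ 2) ^ j / (Nat.factorial j : ℝ) :=
      Real.summable_pow_div_factorial _
    have hP4 : Summable fun k : ℕ => (k : ℝ) ^ 2 * (r ^ 2) ^ k := by
      have hlt : ‖r ^ 2‖ < 1 := by
        rw [Real.norm_eq_abs, abs_of_pos (by positivity)]; nlinarith
      exact summable_pow_mul_geometric_of_norm_lt_one 2 hlt
    have h12 := hP1.mul_of_nonneg hP2 (fun j => by positivity) (fun k => by positivity)
    have h34 := hP3.mul_of_nonneg hP4 (fun j => by positivity) (fun k => by positivity)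
    refine Summable.of_nonneg_of_le (fun jk => sq_nonneg _) (fun jk => ?_)
      (((h12.add h34)).mul_left 2)
    have hfact : (0 : ℝ) < (Nat.factorial jk.1 : ℝ) := by
      exact_mod_cast Nat.factorial_pos jk.1
    have key : ((((jk.1 : ℝ) + jk.2) * (R ^ jk.1 * r ^ jk.2)) / sqf jk.1) ^ 2
        = ((jk.1 : ℝ) + jk.2) ^ 2 * ((R ^ 2) ^ jk.1 * (r ^ 2) ^ jk.2)
            / (Nat.factorial jk.1 : ℝ) := by
      rw [div_pow, sq (sqf jk.1), sqf_mul_self, mul_pow, mul_pow, ← pow_mul, ← pow_mul,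
        mul_comm jk.1 2, mul_comm jk.2 2, pow_mul, pow_mul]
    rw [key]
    have hjk : ((jk.1 : ℝ) + jk.2) ^ 2 ≤ 2 * (jk.1 : ℝ) ^ 2 + 2 * (jk.2 : ℝ) ^ 2 := by
      nlinarith [sq_nonneg ((jk.1 : ℝ) - jk.2)]
    calc ((jk.1 : ℝ) + jk.2) ^ 2 * ((R ^ 2) ^ jk.1 * (r ^ 2) ^ jk.2) / (Nat.factorial jk.1 : ℝ)
        ≤ (2 * (jk.1 : ℝ) ^ 2 + 2 * (jk.2 : ℝ) ^ 2) * ((R ^ 2) ^ jk.1 * (r ^ 2) ^ jk.2)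
            / (Nat.factorial jk.1 : ℝ) := by gcongr
      _ = 2 * ((jk.1 : ℝ) ^ 2 * (R ^ 2) ^ jk.1 / (Nat.factorial jk.1 : ℝ) * (r ^ 2) ^ jk.2
          + (R ^ 2) ^ jk.1 / (Nat.factorial jk.1 : ℝ)
            * ((jk.2 : ℝ) ^ 2 * (r ^ 2) ^ jk.2)) := by
          field_simp
  have hU : Summable u := by
    have hmu := summable_mul_sq (fun jk => norm_nonneg (b jk))
      (fun jk => div_nonneg (by positivity) (sqf_pos _).le)
      (summable_sq_coeff b) hg2
    exact hmu.mul_left (1 / r)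
  have hf0 : Summable fun jk : ℕ × ℕ => a jk * p.1 ^ jk.1 * p.2 ^ jk.2 :=
    summable_term b ⟨p, hp2⟩
  have hFD := hasFDerivAt_tsum_of_isPreconnected hU hso hsc hderiv hbound hps hf0 hps
  exact hFD.differentiableAt.differentiableWithinAt

/-! ### evaluation of single basis vectors -/

lemma ev_single (m : ℕ × ℕ) (a : ℂ) (p : X) :
    ev (lp.single 2 m a) p = (a / (sqf m.1 : ℂ)) * p.1.1 ^ m.1 * p.1.2 ^ m.2 := by
  rw [ev]
  rw [tsum_eq_single m ?_]
  · rw [lp.single_apply_self]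
    rfl
  · intro n hn
    rw [lp.single_apply_ne (E := fun _ : ℕ × ℕ => ℂ) 2 m a hn]
    simp

/-! ### multipliers -/

lemma ev_e00 (p : X) : ev (lp.single 2 ((0,0) : ℕ × ℕ) (1:ℂ)) p = 1 := by
  rw [ev_single]
  simp [sqf]

lemma ev_e10 (p : X) : ev (lp.single 2 ((1,0) : ℕ × ℕ) (1:ℂ)) p = p.1.1 := by
  rw [ev_single]
  simp [sqf]

lemma isOpen_S : IsOpen {q : ℂ × ℂ | ‖q.2‖ < 1} := by
  have : {q : ℂ × ℂ | ‖q.2‖ < 1}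
      = (fun q : ℂ × ℂ => ‖q.2‖) ⁻¹' Set.Iio 1 := rfl
  rw [this]
  exact isOpen_Iio.preimage (continuous_norm.comp continuous_snd)

lemma multiplier_props (h : X → ℂ) (hm : IsMultiplier ev h) :
    (∃ C : ℝ, ∀ p : X, ‖h p‖ ≤ C) ∧
    (∃ F : ℂ × ℂ → ℂ,
      DifferentiableOn ℂ F {q : ℂ × ℂ | ‖q.2‖ < 1} ∧
      ∀ p : X, F p.1 = h p) ∧
    (∀ p q : X, p.1.2 = q.1.2 → h p = h q) := by
  classical
  have evinj : ∀ u v : H, (∀ p, ev u p = ev v p) → u = v := fun u v huv =>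
    ev_injective (funext huv)
  -- the function h is itself a member of the space
  obtain ⟨g, hg⟩ := hm (lp.single 2 ((0,0) : ℕ × ℕ) (1:ℂ))
  have hgh : ∀ p, ev g p = h p := by
    intro p
    rw [congrFun hg p, ev_e00, mul_one]
  -- the multiplication operator
  choose T0 hT0 using hm
  set Tlin : H →ₗ[ℂ] H :=
    { toFun := T0
      map_add' := by
        intro f1 f2
        refine evinj _ _ fun p => ?_
        rw [congrFun (hT0 (f1 + f2)) p, ev_add, ev_add, congrFun (hT0 f1) p,
          congrFun (hT0 f2) p]
        ring
      map_smul' := by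
        intro c f
        refine evinj _ _ fun p => ?_
        rw [RingHom.id_apply, congrFun (hT0 (c • f)) p, ev_smul, ev_smul,
          congrFun (hT0 f) p]
        ring } with hTlin
  have hcont : Continuous Tlin := by
    apply Tlin.continuous_of_seq_closed_graph
    intro un x y hux huy
    refine evinj _ _ fun p => ?_
    have hky : Filter.Tendsto (fun n => ⟪kvec p, (⇑Tlin ∘ un) n⟫_ℂ)
        Filter.atTop (nhds ⟪kvec p, y⟫_ℂ) :=
      (Filter.Tendsto.inner tendsto_const_nhds huy)
    have hkx : Filter.Tendsto (fun n => h p * ⟪kvec p, un n⟫_ℂ)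
        Filter.atTop (nhds (h p * ⟪kvec p, x⟫_ℂ)) :=
      (Filter.Tendsto.inner tendsto_const_nhds hux).const_mul _
    have heq : ∀ n, ⟪kvec p, (⇑Tlin ∘ un) n⟫_ℂ = h p * ⟪kvec p, un n⟫_ℂ := by
      intro n
      rw [← ev_eq_inner, ← ev_eq_inner]
      exact congrFun (hT0 (un n)) p
    have hlim : Filter.Tendsto (fun n => h p * ⟪kvec p, un n⟫_ℂ)
        Filter.atTop (nhds ⟪kvec p, y⟫_ℂ) := by
      refine hky.congr fun n => heq n
    have huniq : ⟪kvec p, y⟫_ℂ = h p * ⟪kvec p, x⟫_ℂ :=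
      tendsto_nhds_unique hlim hkx
    rw [ev_eq_inner, huniq, ← ev_eq_inner, ← congrFun (hT0 x) p]
    rfl
  set T : H →L[ℂ] H := ⟨Tlin, hcont⟩ with hT
  have hTapp : ∀ f : H, T f = T0 f := fun f => rfl
  have hbd : ∀ p : X, ‖h p‖ ≤ ‖T‖ := by
    intro p
    have hk0 : kvec p ≠ 0 := by
      intro h0
      exact ev_kvec_ne p p (by rw [h0]; exact ev_zero p)
    have hnk : 0 < ‖kvec p‖ := norm_pos_iff.2 hk0
    have he : ev (T0 (kvec p)) p = h p * ((‖kvec p‖ : ℂ)) ^ 2 := by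
      rw [congrFun (hT0 (kvec p)) p, ev_eq_inner, inner_self_eq_norm_sq_to_K]
      norm_cast
    have hle : ‖ev (T0 (kvec p)) p‖ ≤ ‖T‖ * ‖kvec p‖ ^ 2 := by
      rw [ev_eq_inner]
      calc ‖⟪kvec p, T0 (kvec p)⟫_ℂ‖ ≤ ‖kvec p‖ * ‖T0 (kvec p)‖ := norm_inner_le_norm _ _
        _ ≤ ‖kvec p‖ * (‖T‖ * ‖kvec p‖) := by
            gcongr
            exact T.le_opNorm (kvec p)
        _ = ‖T‖ * ‖kvec p‖ ^ 2 := by ring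
    have hnn : ‖ev (T0 (kvec p)) p‖ = ‖h p‖ * ‖kvec p‖ ^ 2 := by
      rw [he, norm_mul, norm_pow, Complex.norm_real, norm_norm]
    rw [hnn] at hle
    exact le_of_mul_le_mul_right hle (pow_pos hnk 2)
  refine ⟨⟨‖T‖, hbd⟩, ?_, ?_⟩
  · exact ⟨_, differentiableOn_F g, fun p => hgh p⟩
  · -- independence of the first variable, via Liouville
    intro p q hpq
    set Fg : ℂ × ℂ → ℂ := fun qq : ℂ × ℂ => ∑' jk : ℕ × ℕ,
      (g jk / (Real.sqrt (Nat.factorial jk.1) : ℂ)) * qq.1 ^ jk.1 * qq.2 ^ jk.2 with hFg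
    have hFgev : ∀ pp : X, Fg pp.1 = ev g pp := fun pp => rfl
    set w : ℂ := p.1.2 with hwdef
    have hw2 : ‖w‖ < 1 := p.2
    set φ : ℂ → ℂ := fun z => Fg (z, w) with hφ
    have hφd : Differentiable ℂ φ := by
      intro z
      have hdF : DifferentiableAt ℂ Fg (z, w) :=
        (differentiableOn_F g).differentiableAt (isOpen_S.mem_nhds hw2)
      exact hdF.comp z ((differentiableAt_id (𝕜 := ℂ) (x := z)).prodMk (differentiableAt_const w))
    have hφval : ∀ z : ℂ, φ z = h ⟨(z, w), hw2⟩ := by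
      intro z
      rw [hφ]
      calc Fg (z, w) = ev g ⟨(z, w), hw2⟩ := hFgev ⟨(z, w), hw2⟩
        _ = h ⟨(z, w), hw2⟩ := hgh _
    have hφb : Bornology.IsBounded (Set.range φ) := by
      rw [isBounded_iff_forall_norm_le]
      refine ⟨‖T‖, ?_⟩
      rintro _ ⟨z, rfl⟩
      rw [hφval z]
      exact hbd _
    have hLiou : φ p.1.1 = φ q.1.1 := hφd.apply_eq_apply_of_bounded hφb _ _
    have hp1 : p = (⟨(p.1.1, w), hw2⟩ : X) := by
      apply Subtype.ext
      exact Prod.ext rfl rfl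
    have hq1 : q = (⟨(q.1.1, w), hw2⟩ : X) := by
      apply Subtype.ext
      exact Prod.ext rfl hpq.symm
    rw [hp1, ← hφval p.1.1, hq1, ← hφval q.1.1]
    exact hLiou

/-! ### no cyclic vectors -/

lemma no_cyclic (b : H) : ¬ IsCyclicVec ev b := by
  classical
  intro hcyc
  rw [IsCyclicVec] at hcyc
  have key : ∀ (g0 : H) (p q : X), p.1.2 = q.1.2 → ev b q * ev g0 p = ev b p * ev g0 q := by
    intro g0 p q hpq
    set v : H := (starRingEnd ℂ) (ev b q) • kvec p - (starRingEnd ℂ) (ev b p) • kvec q with hv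
    have hform : ∀ g : H, ⟪v, g⟫_ℂ = ev b q * ev g p - ev b p * ev g q := by
      intro g
      rw [hv, inner_sub_left, inner_smul_left, inner_smul_left, ← ev_eq_inner, ← ev_eq_inner]
      simp
    have hC : IsClosed {g : H | ⟪v, g⟫_ℂ = 0} :=
      isClosed_eq (Continuous.inner continuous_const continuous_id) continuous_const
    have hsub : {g : H | ∃ h : X → ℂ, IsMultiplier ev h ∧ ev g = fun x => h x * ev b x}
        ⊆ {g : H | ⟪v, g⟫_ℂ = 0} := by
      rintro g ⟨hmul, hmm, hgev⟩
      rw [Set.mem_setOf_eq, hform g, congrFun hgev p, congrFun hgev q,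
        (multiplier_props hmul hmm).2.2 p q hpq]
      ring
    have huniv : {g : H | ⟪v, g⟫_ℂ = 0} = Set.univ := by
      rw [← hC.closure_eq]
      exact (hcyc.mono hsub).closure_eq
    have hall : ⟪v, g0⟫_ℂ = 0 := by
      have : g0 ∈ {g : H | ⟪v, g⟫_ℂ = 0} := huniv ▸ Set.mem_univ g0
      exact this
    rw [hform g0] at hall
    linear_combination hall
  have hb0 : ∀ p : X, ev b p = 0 := by
    intro p
    have hz : ‖p.1.2‖ < 1 := p.2
    set P0 : X := ⟨(0, p.1.2), hz⟩ with hP0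
    set P1 : X := ⟨(1, p.1.2), hz⟩ with hP1
    have h10P0 : ev (lp.single 2 ((1,0) : ℕ × ℕ) (1:ℂ)) P0 = 0 := by
      rw [ev_e10]
    have h10P1 : ev (lp.single 2 ((1,0) : ℕ × ℕ) (1:ℂ)) P1 = 1 := by
      rw [ev_e10]
    have hbP0 : ev b P0 = 0 := by
      have hk := key (lp.single 2 ((1,0) : ℕ × ℕ) (1:ℂ)) P1 P0 rfl
      rw [h10P0, h10P1, mul_one, mul_zero] at hk
      exact hk
    have hk := key (lp.single 2 ((0,0) : ℕ × ℕ) (1:ℂ)) p P0 rfl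
    rw [ev_e00, ev_e00, mul_one, mul_one, hbP0] at hk
    exact hk.symm
  -- contradiction: the dense set is contained in a proper closed set
  have hC : IsClosed {g : H | ⟪kvec x₀, g⟫_ℂ = 0} :=
    isClosed_eq (Continuous.inner continuous_const continuous_id) continuous_const
  have hsub : {g : H | ∃ h : X → ℂ, IsMultiplier ev h ∧ ev g = fun x => h x * ev b x}
      ⊆ {g : H | ⟪kvec x₀, g⟫_ℂ = 0} := by
    rintro g ⟨hmul, hmm, hgev⟩
    rw [Set.mem_setOf_eq, ← ev_eq_inner, congrFun hgev x₀, hb0 x₀, mul_zero]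
  have huniv : {g : H | ⟪kvec x₀, g⟫_ℂ = 0} = Set.univ := by
    rw [← hC.closure_eq]
    exact (hcyc.mono hsub).closure_eq
  have h1 : ⟪kvec x₀, lp.single 2 ((0,0) : ℕ × ℕ) (1:ℂ)⟫_ℂ = 0 := by
    have hmem : (lp.single 2 ((0,0) : ℕ × ℕ) (1:ℂ) : H)
        ∈ {g : H | ⟪kvec x₀, g⟫_ℂ = 0} := by
      rw [huniv]
      trivial
    exact hmem
  rw [← ev_eq_inner, ev_e00] at h1
  exact one_ne_zero h1


end Stmt11

open Stmt11 in
/-- The Hilbert space of power series `f(z₁,z₂) = Σ a_{jk} z₁ʲ z₂ᵏ` on `ℂ × 𝔻` with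
`‖f‖² = Σ j!·|a_{jk}|² < ∞` is an RKHS on `ℂ × 𝔻` whose elements are holomorphic,
with reproducing kernel `K((z₁,z₂),(w₁,w₂)) = exp(z₁·conj w₁)/(1 - z₂·conj w₂)`,
normalized at `(0,0)` and nowhere zero; every multiplier of `H` is a bounded
holomorphic function on `ℂ × 𝔻` independent of the first variable, and `H` has no
cyclic functions. -/
theorem stmt_11 :
    -- the defining power series converges absolutely on `ℂ × 𝔻`
    (∀ (b : H) (p : X), Summable fun jk : ℕ × ℕ =>
      ‖(b jk / (Real.sqrt (Nat.factorial jk.1) : ℂ)) * p.1.1 ^ jk.1 * p.1.2 ^ jk.2‖) ∧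
    -- `H` is a space of functions on `ℂ × 𝔻`
    (Function.Injective fun b : H => ev b) ∧
    -- every element of `H` is holomorphic on `ℂ × 𝔻`
    (∀ b : H, ∃ F : ℂ × ℂ → ℂ,
      DifferentiableOn ℂ F {q : ℂ × ℂ | ‖q.2‖ < 1} ∧
      ∀ p : X, F p.1 = ev b p) ∧
    -- `H` is an RKHS with kernel `exp(z₁·conj w₁)/(1 - z₂·conj w₂)`,
    -- normalized at `(0,0)` and nowhere zero
    (∃ k : X → H,
      (∀ (b : H) (p : X), ev b p = ⟪k p, b⟫_ℂ) ∧
      (∀ p q : X, ev (k q) p =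
        Complex.exp (p.1.1 * (starRingEnd ℂ) q.1.1) /
          (1 - p.1.2 * (starRingEnd ℂ) q.1.2)) ∧
      (∀ p : X, ev (k x₀) p = 1) ∧
      (∀ p q : X, ev (k q) p ≠ 0)) ∧
    -- every multiplier is bounded, holomorphic, and independent of the first variable
    (∀ h : X → ℂ, IsMultiplier ev h →
      (∃ C : ℝ, ∀ p : X, ‖h p‖ ≤ C) ∧
      (∃ F : ℂ × ℂ → ℂ,
        DifferentiableOn ℂ F {q : ℂ × ℂ | ‖q.2‖ < 1} ∧
        ∀ p : X, F p.1 = h p) ∧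
      (∀ p q : X, p.1.2 = q.1.2 → h p = h q)) ∧
    -- `H` contains no cyclic functions
    (∀ b : H, ¬ IsCyclicVec ev b) := by
  classical
  refine ⟨summable_norm_term, ev_injective, ?_, ?_, multiplier_props, no_cyclic⟩
  · intro b
    exact ⟨_, differentiableOn_F b, fun p => rfl⟩
  · exact ⟨kvec, ev_eq_inner, ev_kvec, ev_kvec_x₀, ev_kvec_ne⟩

end
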